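/- Let f, h ∈ F_q[X] be non-constant, t₀ ∈ F_q, and suppose f(h(X)) - t₀ splits into distinct linear factors over F_q. If α is a root of f(X) - t₀ in the algebraic closure of F_q, then α ∈ F_q and h(X) - α splits into deg h distinct linear factors over F_q. -/

import Mathlib

open Polynomial

/-- If `f(h(X)) - t₀` splits into distinct linear factors over `F` and `α` is
a root of `f(X) - t₀` in the algebraic closure of `F`, then `α ∈ F` and `h(X) - α` splits
into `deg h` distinct linear factors over `F`. -/
theorem root_in_base_and_inner_splits {F : Type*} [Field F] [DecidableEq F]
    (f h : F[X]) (hf : 1 ≤ f.natDegree) (hh : 1 ≤ h.natDegree) (t₀ : F)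
    (hsplit : (f.comp h - C t₀).Splits)
    (hsep : Squarefree (f.comp h - C t₀))
    (α : AlgebraicClosure F)
    (hα : Polynomial.aeval α (f - C t₀) = 0) :
    ∃ a : F, algebraMap F (AlgebraicClosure F) a = α ∧
      (h - C a).Splits ∧ Squarefree (h - C a) ∧
      (h - C a).roots.toFinset.card = h.natDegree := by
  set φ : F →+* AlgebraicClosure F := algebraMap F (AlgebraicClosure F) with hφ
  have hne : f.comp h - C t₀ ≠ 0 := hsep.ne_zero
  -- find a root β of h.map φ - C α
  have hdeg : (h.map φ - C α).degree ≠ 0 := by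
    have h1 : (h.map φ - C α).natDegree = h.natDegree := by
      rw [natDegree_sub_C, natDegree_map]
    intro hc
    have h2 : (h.map φ - C α).natDegree = 0 :=
      natDegree_eq_zero_iff_degree_le_zero.mpr (le_of_eq hc)
    omega
  obtain ⟨β, hβ⟩ := IsAlgClosed.exists_root (k := AlgebraicClosure F) _ hdeg
  have hβα : (h.map φ).eval β = α := by
    have := hβ
    simp only [IsRoot, eval_sub, eval_C] at this
    linear_combination this
  -- β is a root of the mapped big polynomial
  have hβ2 : ((f.comp h - C t₀).map φ).eval β = 0 := by
    simp only [Polynomial.map_sub, map_comp, eval_sub, eval_comp, map_C, eval_C, hβα]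
    have : (f.map φ).eval α - φ t₀ = aeval α (f - C t₀) := by
      simp [aeval_def, eval_map, eval₂_sub, hφ]
    rw [this, hα]
  -- roots of mapped polynomial come from F
  have hroots := hsplit.roots_map φ
  have hβmem : β ∈ ((f.comp h - C t₀).map φ).roots := by
    exact mem_roots'.mpr ⟨(Polynomial.map_ne_zero_iff φ.injective).mpr hne, hβ2⟩
  rw [hroots, Multiset.mem_map] at hβmem
  obtain ⟨b, _, hbβ⟩ := hβmem
  refine ⟨h.eval b, ?_, ?_⟩
  · -- φ (h.eval b) = α
    rw [← hβα, ← hbβ]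
    simp [eval_map, eval₂_at_apply]
  -- now the main three claims for a = h.eval b
  set a := h.eval b with ha
  have haα : φ a = α := by rw [← hβα, ← hbβ]; simp [eval_map, eval₂_at_apply, ha]
  have hfa : (f - C t₀).eval a = 0 := by
    apply φ.injective
    rw [map_zero, ← hα, ← haα]
    simp [aeval_def, eval₂_at_apply, eval_map, hφ]
  have hdvd : (h - C a) ∣ f.comp h - C t₀ := by
    obtain ⟨r, hr⟩ := dvd_iff_isRoot.mpr hfa
    refine ⟨r.comp h, ?_⟩
    have := congrArg (·.comp h) hr
    simpa [sub_comp, mul_comp] using this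
  have hsp : (h - C a).Splits :=
    hsplit.of_dvd hne hdvd
  have hsq : Squarefree (h - C a) := hsep.squarefree_of_dvd hdvd
  refine ⟨hsp, hsq, ?_⟩
  have hnd : (h - C a).roots.Nodup := by
    rw [Multiset.nodup_iff_count_le_one]
    intro r
    rw [count_roots]
    by_contra hc
    push_neg at hc
    have : (X - C r) ^ 2 ∣ h - C a :=
      (pow_dvd_pow _ hc).trans (pow_rootMultiplicity_dvd _ r)
    have hu := hsq (X - C r) (by rwa [← pow_two])
    simpa using natDegree_eq_zero_of_isUnit hu
  rw [Multiset.toFinset_card_of_nodup hnd,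
    splits_iff_card_roots.mp hsp, natDegree_sub_C]
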